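/- Let q be a prime power, m a positive integer dividing q^n − 1, and V a k-dimensional 𝔽_q-subspace of 𝔽_{q^n} whose subspace polynomial is the trinomial L_V(X) = X^{q^k} + a_s X^{q^s} + a_0 X with a_s ≠ 0 and 1 ≤ s < k. If there exist α ∈ 𝔽_{q^n}^* and i ∈ {0, 1, …, n−1} such that σ_i(V) = α^m V, then a_0^{(q^k − q^s)(q^i − 1)} = a_s^{(q^k − 1)(q^i − 1)} (this is the paper's identity (a_0^{(q^k−q^s)/(q^s−1)} / a_s^{(q^k−1)/(q^s−1)})^{q^i−1} = 1 with the exponents cleared of the denominator q^s − 1). -/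

import Mathlib

open Polynomial

/-- The `m`-quasi cyclic shift of a subspace `V` by `a`: `a • V = {a * v : v ∈ V}`. -/
noncomputable def qshift {K F : Type*} [Field K] [Field F] [Algebra K F]
    (a : F) (V : Submodule K F) : Submodule K F :=
  V.map (LinearMap.mulLeft K a)

/-- The subspace polynomial `L_V(X) = ∏_{v ∈ V} (X - v)` of a subspace `V` of a
finite field. -/
noncomputable def subspacePoly {K F : Type*} [Field K] [Field F] [Algebra K F] [Fintype F]
    (V : Submodule K F) : F[X] :=
  ∏ v ∈ (Set.toFinite (V : Set F)).toFinset, (X - C v)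

/-- The subspace distance `d(U,V) = dim U + dim V - 2 dim (U ⊓ V)`. -/
noncomputable def subspaceDist {K F : Type*} [Field K] [Field F] [Algebra K F]
    (U V : Submodule K F) : ℕ :=
  Module.finrank K U + Module.finrank K V - 2 * Module.finrank K ↥(U ⊓ V)

theorem frobenius_eq_quasi_shift_coeff_identity
    {K F : Type*} [Field K] [Fintype K] [Field F] [Fintype F] [Algebra K F]
    (q n m k s i : ℕ) (hq : Fintype.card K = q) (hn : 0 < n)
    (hF : Module.finrank K F = n) (hm : 0 < m) (hmdvd : m ∣ q ^ n - 1)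
    (V : Submodule K F) (hVk : Module.finrank K ↥V = k)
    (a0 as : F) (has : as ≠ 0) (hs1 : 1 ≤ s) (hsk : s < k)
    (hLV : subspacePoly V = X ^ q ^ k + C as * X ^ q ^ s + C a0 * X)
    (α : F) (hα : α ≠ 0) (hin : i < n)
    (hshift : (fun x => x ^ q ^ i) '' (V : Set F) = ↑(qshift (α ^ m) V)) :
    a0 ^ ((q ^ k - q ^ s) * (q ^ i - 1)) = as ^ ((q ^ k - 1) * (q ^ i - 1)) := by
  classical
  set β := α ^ m with hβdef
  have hβ0 : β ≠ 0 := pow_ne_zero _ hα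
  set p := ringChar K with hpdef
  haveI hKp : CharP K p := ringChar.charP K
  haveI hfact : Fact p.Prime := ⟨CharP.char_is_prime K p⟩
  haveI hFp : CharP F p := charP_of_injective_algebraMap (algebraMap K F).injective p
  obtain ⟨t, hpp, hcardK⟩ := FiniteField.card K p
  have hqpt : q = p ^ (t : ℕ) := by rw [← hq, hcardK]
  set σ : F →+* F := iterateFrobenius F p ((t : ℕ) * i) with hσdef
  have hσ : ∀ x : F, σ x = x ^ q ^ i := by
    intro x
    rw [hσdef, iterateFrobenius_def, hqpt, ← pow_mul]
  set T := (Set.toFinite (V : Set F)).toFinset with hTdef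
  have hq2 : 2 ≤ q := by rw [← hq]; exact Fintype.one_lt_card
  have hTcard : T.card = q ^ k := by
    haveI : Fintype ↥(V : Set F) := Fintype.ofFinite _
    rw [hTdef, Set.Finite.card_toFinset]
    have h : Fintype.card ↥V = q ^ k := by rw [← hq, ← hVk]; exact Module.card_eq_pow_finrank
    rw [← h]
    exact Fintype.card_congr (Equiv.refl _)
  -- equal images
  have hsets : (fun x => σ x) '' (V : Set F) = (fun x => β * x) '' (V : Set F) := by
    have h1 : (fun x : F => σ x) = fun x : F => x ^ q ^ i := by funext x; exact hσ x
    rw [h1, hshift, qshift, Submodule.map_coe]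
    rfl
  have himg : T.image (fun x => σ x) = T.image (fun x => β * x) := by
    apply Finset.coe_injective
    rw [Finset.coe_image, Finset.coe_image, hTdef, Set.Finite.coe_toFinset]
    exact hsets
  -- products
  have hinjσ : ∀ x ∈ T, ∀ y ∈ T, σ x = σ y → x = y := fun x _ y _ h => σ.injective h
  have hinjβ : ∀ x ∈ T, ∀ y ∈ T, β * x = β * y → x = y :=
    fun x _ y _ h => mul_left_cancel₀ hβ0 h
  have key : ∏ v ∈ T, (X - C (σ v)) = ∏ v ∈ T, (X - C (β * v)) := by
    have e1 : ∏ w ∈ T.image (fun x => σ x), (X - C w) = ∏ v ∈ T, (X - C (σ v)) :=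
      Finset.prod_image hinjσ
    have e2 : ∏ w ∈ T.image (fun x => β * x), (X - C w) = ∏ v ∈ T, (X - C (β * v)) :=
      Finset.prod_image hinjβ
    rw [← e1, ← e2, himg]
  have hmap : ∏ v ∈ T, (X - C (σ v)) =
      X ^ q ^ k + C (σ as) * X ^ q ^ s + C (σ a0) * X := by
    have h1 : ∏ v ∈ T, (X - C (σ v)) = (subspacePoly V).map σ := by
      rw [subspacePoly, Polynomial.map_prod]
      exact (Finset.prod_congr rfl fun v _ => by
        rw [Polynomial.map_sub, Polynomial.map_X, Polynomial.map_C]).symm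
    rw [h1, hLV, Polynomial.map_add, Polynomial.map_add, Polynomial.map_mul,
        Polynomial.map_mul, Polynomial.map_pow, Polynomial.map_pow, Polynomial.map_X,
        Polynomial.map_C, Polynomial.map_C]
  -- compose with C β * X
  have hcomp1 : (∏ v ∈ T, (X - C (β * v))).comp (C β * X)
      = C (β ^ q ^ k) * subspacePoly V := by
    rw [Polynomial.prod_comp]
    have : ∀ v ∈ T, (X - C (β * v)).comp (C β * X) = C β * (X - C v) := by
      intro v _
      rw [sub_comp, X_comp, C_comp, mul_sub, ← C_mul]
    rw [Finset.prod_congr rfl this, Finset.prod_mul_distrib, Finset.prod_const, hTcard,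
        ← C_pow, subspacePoly]
  have hcomp2 : (∏ v ∈ T, (X - C (β * v))).comp (C β * X)
      = C (β ^ q ^ k) * X ^ q ^ k + C (σ as * β ^ q ^ s) * X ^ q ^ s
        + C (σ a0 * β) * X := by
    rw [← key, hmap]
    simp only [add_comp, mul_comp, pow_comp, X_comp, C_comp, mul_pow, C_mul, C_pow]
    ring
  have heq : C (β ^ q ^ k) * X ^ q ^ k + C (σ as * β ^ q ^ s) * X ^ q ^ s
        + C (σ a0 * β) * X
      = C (β ^ q ^ k) * X ^ q ^ k + C (β ^ q ^ k * as) * X ^ q ^ s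
        + C (β ^ q ^ k * a0) * X := by
    rw [← hcomp2, hcomp1, hLV]
    simp only [C_mul, C_pow]
    ring
  -- exponent inequalities
  have h1qs : 1 < q ^ s := Nat.one_lt_pow (by omega) (by omega)
  have hqsk : q ^ s < q ^ k := Nat.pow_lt_pow_right (by omega) hsk
  have h1qk : 1 < q ^ k := lt_trans h1qs hqsk
  -- coefficient at q^s
  have hcs : σ as * β ^ q ^ s = β ^ q ^ k * as := by
    have h := congrArg (fun P => Polynomial.coeff P (q ^ s)) heq
    simp only [coeff_add, coeff_C_mul_X_pow, coeff_C_mul_X,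
      if_neg (Nat.ne_of_lt hqsk), if_pos rfl,
      if_neg (Nat.ne_of_gt h1qs), add_zero, zero_add] at h
    exact h
  have hc0 : σ a0 * β = β ^ q ^ k * a0 := by
    have h := congrArg (fun P => Polynomial.coeff P 1) heq
    simp only [coeff_add, coeff_C_mul_X_pow, coeff_C_mul_X,
      if_neg (Nat.ne_of_lt h1qk), if_neg (Nat.ne_of_lt h1qs), if_pos rfl,
      add_zero, zero_add] at h
    exact h
  -- a0 ≠ 0
  have h0mem : (0 : F) ∈ T := by rw [hTdef, Set.Finite.mem_toFinset]; exact V.zero_mem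
  have hprod : (X - C (0 : F)) * ∏ v ∈ T.erase 0, (X - C v) = subspacePoly V := by
    rw [subspacePoly, ← hTdef]
    exact Finset.mul_prod_erase T (fun v => X - C v) h0mem
  have ha0 : a0 ≠ 0 := by
    have e1 : (subspacePoly V).coeff 1 = a0 := by
      rw [hLV]
      simp only [coeff_add, coeff_X_pow, coeff_C_mul_X_pow, coeff_C_mul_X,
        if_neg (Nat.ne_of_lt h1qk), if_neg (Nat.ne_of_lt h1qs), if_pos rfl, if_true,
        add_zero, zero_add]
    have e2 : (subspacePoly V).coeff 1 = ∏ v ∈ T.erase 0, ((0 : F) - v) := by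
      rw [← hprod, map_zero, sub_zero, coeff_X_mul, coeff_zero_eq_eval_zero, eval_prod]
      exact Finset.prod_congr rfl fun v _ => by rw [eval_sub, eval_X, eval_C]
    rw [← e1, e2]
    rw [Finset.prod_ne_zero_iff]
    intro v hv
    have : v ≠ 0 := (Finset.mem_erase.mp hv).1
    simpa using this
  -- final algebra
  rw [hσ] at hcs hc0
  have hqipos : 0 < q ^ i := Nat.pow_pos (by omega)
  have ei : q ^ i = (q ^ i - 1) + 1 := by omega
  have ek : q ^ k = (q ^ k - 1) + 1 := by omega
  have eks : q ^ k = (q ^ k - q ^ s) + q ^ s := by omega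
  have e0 : a0 ^ (q ^ i - 1) = β ^ (q ^ k - 1) := by
    have h := hc0
    rw [ei, ek, pow_succ, pow_succ] at h
    apply mul_right_cancel₀ (mul_ne_zero ha0 hβ0)
    calc a0 ^ (q ^ i - 1) * (a0 * β) = a0 ^ (q ^ i - 1) * a0 * β := by ring
      _ = β ^ (q ^ k - 1) * β * a0 := h
      _ = β ^ (q ^ k - 1) * (a0 * β) := by ring
  have es : as ^ (q ^ i - 1) = β ^ (q ^ k - q ^ s) := by
    have h := hcs
    rw [ei, eks, pow_succ, pow_add] at h
    apply mul_right_cancel₀ (mul_ne_zero has (pow_ne_zero (q ^ s) hβ0))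
    calc as ^ (q ^ i - 1) * (as * β ^ q ^ s) = as ^ (q ^ i - 1) * as * β ^ q ^ s := by ring
      _ = β ^ (q ^ k - q ^ s) * β ^ q ^ s * as := h
      _ = β ^ (q ^ k - q ^ s) * (as * β ^ q ^ s) := by ring
  calc a0 ^ ((q ^ k - q ^ s) * (q ^ i - 1))
      = (a0 ^ (q ^ i - 1)) ^ (q ^ k - q ^ s) := pow_mul' a0 _ _
    _ = (β ^ (q ^ k - 1)) ^ (q ^ k - q ^ s) := by rw [e0]
    _ = (β ^ (q ^ k - q ^ s)) ^ (q ^ k - 1) := pow_right_comm β _ _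
    _ = (as ^ (q ^ i - 1)) ^ (q ^ k - 1) := by rw [es]
    _ = as ^ ((q ^ k - 1) * (q ^ i - 1)) := (pow_mul' as _ _).symm
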